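/- Let (B, L) be a Banach SNL space with Banach SNL dual (B*, L̃), and A a norm-closed linear L-positive subspace of B such that A⁰ is L̃-negative. Then A is maximally L-positive. -/

import Mathlib

open NormedSpace

noncomputable def qL {B : Type*} [NormedAddCommGroup B] [NormedSpace ℝ B]
    (L : B →L[ℝ] StrongDual ℝ B) (b : B) : ℝ := (1 / 2) * L b b

def LPositive {B : Type*} [NormedAddCommGroup B] [NormedSpace ℝ B]
    (L : B →L[ℝ] StrongDual ℝ B) (A : Set B) : Prop :=
  A.Nonempty ∧ ∀ b ∈ A, ∀ c ∈ A, 0 ≤ qL L (b - c)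

def MaxLPositive {B : Type*} [NormedAddCommGroup B] [NormedSpace ℝ B]
    (L : B →L[ℝ] StrongDual ℝ B) (A : Set B) : Prop :=
  LPositive L A ∧ ∀ A' : Set B, LPositive L A' → A ⊆ A' → A' = A

section Aux

variable {E : Type*} [NormedAddCommGroup E] [NormedSpace ℝ E]

lemma qL_sub_smul (T : E →L[ℝ] StrongDual ℝ E) (hs : ∀ x y : E, T y x = T x y)
    (x y : E) (t : ℝ) :
    qL T (x - t • y) = qL T x - t * T x y + t ^ 2 * qL T y := by
  have h := hs x y
  simp only [qL, map_sub, map_smul, ContinuousLinearMap.sub_apply,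
    ContinuousLinearMap.smul_apply, smul_eq_mul]
  rw [h]
  ring

lemma qL_add_smul (T : E →L[ℝ] StrongDual ℝ E) (hs : ∀ x y : E, T y x = T x y)
    (x y : E) (t : ℝ) :
    qL T (x + t • y) = qL T x + t * T x y + t ^ 2 * qL T y := by
  have h := qL_sub_smul T hs x y (-t)
  rw [neg_smul, sub_neg_eq_add] at h
  rw [h]; ring

lemma abs_qL_le (T : E →L[ℝ] StrongDual ℝ E) (hT : ‖T‖ ≤ 1) (z : E) :
    |qL T z| ≤ 1 / 2 * ‖z‖ ^ 2 := by
  have h1 : |T z z| ≤ ‖z‖ ^ 2 := by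
    calc |T z z| = ‖T z z‖ := (Real.norm_eq_abs _).symm
    _ ≤ ‖T z‖ * ‖z‖ := (T z).le_opNorm z
    _ ≤ (‖T‖ * ‖z‖) * ‖z‖ := by gcongr; exact T.le_opNorm z
    _ ≤ (1 * ‖z‖) * ‖z‖ := by gcongr
    _ = ‖z‖ ^ 2 := by ring
  have h2 : |qL T z| = 1 / 2 * |T z z| := by
    rw [qL, abs_mul]; norm_num
  rw [h2]; linarith

lemma norm_apply_le_of_norm_le_one (T : E →L[ℝ] StrongDual ℝ E) (hT : ‖T‖ ≤ 1) (z : E) :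
    ‖T z‖ ≤ ‖z‖ := by
  calc ‖T z‖ ≤ ‖T‖ * ‖z‖ := T.le_opNorm z
  _ ≤ 1 * ‖z‖ := mul_le_mul_of_nonneg_right hT (norm_nonneg _)
  _ = ‖z‖ := one_mul _

/-- The key iteration lemma: given `b` positively related to a subspace `A`,
there are points `s ∈ A` making the restriction of `L (b - s)` to `A`
arbitrarily small relative to `1 + ‖b - s‖`. -/
lemma key_iteration (L : E →L[ℝ] StrongDual ℝ E) (hL : ‖L‖ ≤ 1)
    (hsym : ∀ x y : E, L y x = L x y) (A : Subspace ℝ E) (b : E)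
    (hq : ∀ s ∈ A, 0 ≤ qL L (b - s)) (η : ℝ) (hη : 0 < η) :
    ∃ s ∈ A, ∀ a ∈ A, |L (b - s) a| ≤ η / (1 + ‖b - s‖) * ‖a‖ := by
  by_contra hcon
  push_neg at hcon
  have step : ∀ s ∈ A, ∃ s' ∈ A, ∃ c : ℝ,
      η / (1 + ‖b - s‖) < c ∧ qL L (b - s') ≤ qL L (b - s) - c ^ 2 / 2 ∧
      ‖b - s'‖ ≤ ‖b - s‖ + c := by
    intro s hs
    obtain ⟨a, ha, hlt⟩ := hcon s hs
    have hN : (0:ℝ) < 1 + ‖b - s‖ := by positivity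
    have hρ : 0 < η / (1 + ‖b - s‖) := by positivity
    have ha0 : a ≠ 0 := by rintro rfl; simp at hlt
    have hanorm : 0 < ‖a‖ := norm_pos_iff.mpr ha0
    set ε : ℝ := if 0 ≤ L (b - s) a then 1 else -1 with hεdef
    set a' : E := (ε / ‖a‖) • a with ha'def
    have ha' : a' ∈ A := A.smul_mem _ ha
    have hεabs : |ε| = 1 := by rw [hεdef]; split <;> simp
    have ha'norm : ‖a'‖ = 1 := by
      rw [ha'def, norm_smul, Real.norm_eq_abs, abs_div, hεabs, abs_norm,
        one_div, inv_mul_cancel₀ (ne_of_gt hanorm)]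
    set c : ℝ := |L (b - s) a| / ‖a‖ with hcdef
    have hca' : L (b - s) a' = c := by
      rw [ha'def, map_smul, smul_eq_mul, hcdef, hεdef]
      split <;> rename_i h
      · rw [abs_of_nonneg h]; ring
      · rw [abs_of_neg (lt_of_not_ge h)]; ring
    have hc : η / (1 + ‖b - s‖) < c := by
      rw [hcdef, lt_div_iff₀ hanorm]; exact hlt
    have hcpos : 0 < c := lt_trans hρ hc
    have hvec : b - (s + c • a') = (b - s) - c • a' := by abel
    refine ⟨s + c • a', A.add_mem hs (A.smul_mem _ ha'), c, hc, ?_, ?_⟩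
    · have hqa' : qL L a' ≤ 1 / 2 := by
        have h1 := abs_qL_le L hL a'
        rw [ha'norm] at h1
        have h2 := (abs_le.mp h1).2
        linarith
      rw [hvec, qL_sub_smul L hsym (b - s) a' c, hca']
      nlinarith [sq_nonneg c]
    · rw [hvec]
      calc ‖(b - s) - c • a'‖ ≤ ‖b - s‖ + ‖c • a'‖ := norm_sub_le _ _
      _ = ‖b - s‖ + c := by
          rw [norm_smul, ha'norm, Real.norm_eq_abs, abs_of_pos hcpos, mul_one]
  choose s' hs'mem cc hcc1 hcc2 hcc3 using step
  set g : {x : E // x ∈ A} → {x : E // x ∈ A} :=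
    fun p => ⟨s' p.1 p.2, hs'mem p.1 p.2⟩ with hgdef
  set seq : ℕ → {x : E // x ∈ A} := fun n => g^[n] ⟨0, A.zero_mem⟩ with hseqdef
  have hseqsucc : ∀ n, seq (n + 1) = g (seq n) := by
    intro n; rw [hseqdef]; exact Function.iterate_succ_apply' g n _
  have main : ∃ Q G C : ℕ → ℝ, (∀ n, 0 ≤ Q n) ∧ (∀ n, 0 ≤ G n) ∧
      (∀ n, η / (1 + G n) < C n) ∧ (∀ n, Q (n + 1) ≤ Q n - C n ^ 2 / 2) ∧
      (∀ n, G (n + 1) ≤ G n + C n) := by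
    refine ⟨fun n => qL L (b - (seq n).1), fun n => ‖b - (seq n).1‖,
      fun n => cc (seq n).1 (seq n).2, fun n => hq _ (seq n).2,
      fun n => norm_nonneg _, fun n => hcc1 (seq n).1 (seq n).2, ?_, ?_⟩
    · intro n
      have h := hcc2 (seq n).1 (seq n).2
      simpa only [hseqsucc n] using h
    · intro n
      have h := hcc3 (seq n).1 (seq n).2
      simpa only [hseqsucc n] using h
  obtain ⟨Q, G, C, hQ0, hGnn, hCb, hQstep, hGstep⟩ := main
  clear hseqsucc hcon
  have hCpos : ∀ n, 0 < C n := by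
    intro n
    refine lt_trans ?_ (hCb n)
    have := hGnn n
    positivity
  have hsum2 : ∀ n, ∑ k ∈ Finset.range n, C k ^ 2 ≤ 2 * Q 0 := by
    intro n
    have key : ∀ m, ∑ k ∈ Finset.range m, C k ^ 2 / 2 ≤ Q 0 - Q m := by
      intro m
      induction m with
      | zero => simp
      | succ m ih =>
        rw [Finset.sum_range_succ]
        have := hQstep m
        linarith
    have h1 := key n
    have h2 := hQ0 n
    rw [← Finset.sum_div] at h1
    linarith
  have hGsum : ∀ n, G n ≤ G 0 + ∑ k ∈ Finset.range n, C k := by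
    intro n
    induction n with
    | zero => simp
    | succ n ih =>
      rw [Finset.sum_range_succ]
      have := hGstep n
      linarith
  have hGbound : ∀ n : ℕ, G n ≤ G 0 + Real.sqrt (2 * Q 0) * Real.sqrt n := by
    intro n
    have hcs : (∑ k ∈ Finset.range n, C k) ^ 2 ≤ n * ∑ k ∈ Finset.range n, C k ^ 2 := by
      have h := sq_sum_le_card_mul_sum_sq (s := Finset.range n) (f := C)
      simpa using h
    have hsnn : 0 ≤ ∑ k ∈ Finset.range n, C k :=
      Finset.sum_nonneg fun k _ => (hCpos k).le
    have h1 : (∑ k ∈ Finset.range n, C k) ^ 2 ≤ (n : ℝ) * (2 * Q 0) := by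
      refine le_trans hcs ?_
      exact mul_le_mul_of_nonneg_left (hsum2 n) (Nat.cast_nonneg n)
    have h2 : ∑ k ∈ Finset.range n, C k ≤ Real.sqrt ((n : ℝ) * (2 * Q 0)) := by
      rw [← Real.sqrt_sq hsnn]
      exact Real.sqrt_le_sqrt h1
    have h3 : Real.sqrt ((n : ℝ) * (2 * Q 0)) = Real.sqrt (2 * Q 0) * Real.sqrt n := by
      rw [Real.sqrt_mul (Nat.cast_nonneg n), mul_comm]
    rw [h3] at h2
    linarith [hGsum n]
  set K : ℝ := 1 + G 0 + Real.sqrt (2 * Q 0) with hKdef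
  have hKpos : 0 < K := by
    have h1 := hGnn 0
    have h2 := Real.sqrt_nonneg (2 * Q 0)
    rw [hKdef]; linarith
  have hKb : ∀ k : ℕ, 1 + G k ≤ K * Real.sqrt (k + 1) := by
    intro k
    have h1 : Real.sqrt k ≤ Real.sqrt (k + 1) := by
      apply Real.sqrt_le_sqrt; linarith
    have h2 : (1 : ℝ) ≤ Real.sqrt (k + 1) := by
      rw [show (1:ℝ) = Real.sqrt 1 from Real.sqrt_one.symm]
      apply Real.sqrt_le_sqrt
      have := Nat.cast_nonneg (α := ℝ) k
      linarith [Real.sqrt_one]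
    have h3 := hGbound k
    have hs0 : 0 ≤ Real.sqrt (2 * Q 0) := Real.sqrt_nonneg _
    have hg0 : 0 ≤ G 0 := hGnn 0
    have t1 : (1 + G 0) ≤ (1 + G 0) * Real.sqrt (k + 1) :=
      le_mul_of_one_le_right (by linarith) h2
    have t2 : Real.sqrt (2 * Q 0) * Real.sqrt k ≤ Real.sqrt (2 * Q 0) * Real.sqrt (k + 1) :=
      mul_le_mul_of_nonneg_left h1 hs0
    have : K * Real.sqrt (k + 1) = (1 + G 0) * Real.sqrt (k + 1)
        + Real.sqrt (2 * Q 0) * Real.sqrt (k + 1) := by rw [hKdef]; ring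
    rw [this]
    linarith
  have hterm : ∀ k : ℕ, η ^ 2 / K ^ 2 * (1 / (k + 1)) ≤ C k ^ 2 := by
    intro k
    have hGk := hGnn k
    have h1 : η / (K * Real.sqrt (k + 1)) ≤ η / (1 + G k) := by
      apply div_le_div_of_nonneg_left hη.le (by linarith) (hKb k)
    have hsqpos : (0:ℝ) < Real.sqrt (k + 1) := by
      apply Real.sqrt_pos.mpr; positivity
    have h2 : η / (K * Real.sqrt (k + 1)) ≤ C k := le_of_lt (lt_of_le_of_lt h1 (hCb k))
    have h3 : 0 < η / (K * Real.sqrt (k + 1)) := by positivity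
    have h4 : (η / (K * Real.sqrt (k + 1))) ^ 2 ≤ C k ^ 2 := by
      apply sq_le_sq' _ h2; linarith
    have h5 : (η / (K * Real.sqrt (k + 1))) ^ 2 = η ^ 2 / (K ^ 2 * ((k : ℝ) + 1)) := by
      rw [div_pow, mul_pow, Real.sq_sqrt (by positivity : (0:ℝ) ≤ (k:ℝ) + 1)]
    rw [h5] at h4
    have h6 : η ^ 2 / K ^ 2 * (1 / ((k : ℝ) + 1)) = η ^ 2 / (K ^ 2 * ((k : ℝ) + 1)) := by
      field_simp
    rw [h6]
    exact h4
  obtain ⟨n, hn⟩ := (Filter.tendsto_atTop.mp Real.tendsto_sum_range_one_div_nat_succ_atTop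
    ((2 * Q 0 + 1) * K ^ 2 / η ^ 2)).exists
  have hsumlow : η ^ 2 / K ^ 2 * ∑ k ∈ Finset.range n, (1 / ((k : ℝ) + 1))
      ≤ ∑ k ∈ Finset.range n, C k ^ 2 := by
    rw [Finset.mul_sum]
    exact Finset.sum_le_sum fun k _ => hterm k
  have hfin : η ^ 2 / K ^ 2 * ((2 * Q 0 + 1) * K ^ 2 / η ^ 2) ≤ 2 * Q 0 := by
    calc η ^ 2 / K ^ 2 * ((2 * Q 0 + 1) * K ^ 2 / η ^ 2)
        ≤ η ^ 2 / K ^ 2 * ∑ k ∈ Finset.range n, (1 / ((k : ℝ) + 1)) := by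
          apply mul_le_mul_of_nonneg_left hn (by positivity)
    _ ≤ ∑ k ∈ Finset.range n, C k ^ 2 := hsumlow
    _ ≤ 2 * Q 0 := hsum2 n
  have heq : η ^ 2 / K ^ 2 * ((2 * Q 0 + 1) * K ^ 2 / η ^ 2) = 2 * Q 0 + 1 := by
    field_simp
  rw [heq] at hfin
  linarith

end Aux

set_option maxHeartbeats 1000000 in
theorem stmt14 {B : Type*} [NormedAddCommGroup B] [NormedSpace ℝ B] [CompleteSpace B]
    [Nontrivial B]
    (L : B →L[ℝ] StrongDual ℝ B) (hL : ‖L‖ ≤ 1)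
    (hsym : ∀ b c : B, L c b = L b c)
    (Lt : StrongDual ℝ B →L[ℝ] StrongDual ℝ (StrongDual ℝ B)) (hLt : @norm _ (ContinuousLinearMap.hasOpNorm (E := StrongDual ℝ B) (F := StrongDual ℝ (StrongDual ℝ B)) (σ₁₂ := RingHom.id ℝ)) Lt ≤ 1)
    (hsymt : ∀ p q : StrongDual ℝ B, Lt q p = Lt p q)
    (hdual : ∀ b : B, Lt (L b) = inclusionInDoubleDual ℝ B b)
    (A : Subspace ℝ B) (hclosed : IsClosed (A : Set B))
    (hpos : ∀ a ∈ A, 0 ≤ qL L a)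
    (hneg : ∀ b' : StrongDual ℝ B, (∀ a ∈ A, b' a = 0) → qL Lt b' ≤ 0) :
    MaxLPositive L (A : Set B) := by
  constructor
  · exact ⟨⟨0, A.zero_mem⟩, fun x hx y hy => hpos _ (A.sub_mem hx hy)⟩
  intro A' hA' hsub
  refine Set.Subset.antisymm ?_ hsub
  intro b hb
  have hq : ∀ s ∈ A, 0 ≤ qL L (b - s) := fun s hs => hA'.2 b hb s (hsub hs)
  by_contra hbA
  -- separating functional
  obtain ⟨f, u, hfu, hub⟩ :=
    geometric_hahn_banach_closed_point A.convex hclosed hbA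
  have hu0 : 0 < u := by simpa using hfu 0 A.zero_mem
  have hfA : ∀ a ∈ A, f a = 0 := by
    intro a ha
    by_contra hfa
    have h1 : f (((u + |f a|) / f a) • a) < u := hfu _ (A.smul_mem _ ha)
    rw [map_smul, smul_eq_mul, div_mul_cancel₀ _ hfa] at h1
    linarith [abs_nonneg (f a)]
  have hfb : 0 < f b := lt_trans hu0 hub
  have hfne : f ≠ 0 := by
    intro h; rw [h] at hfb; simp at hfb
  have hfnorm : 0 < ‖f‖ := norm_pos_iff.mpr hfne
  set u' : StrongDual ℝ B := ‖f‖⁻¹ • f with hu'def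
  have hu'A : ∀ a ∈ A, u' a = 0 := by
    intro a ha; simp [hu'def, hfA a ha]
  have hu'norm : ‖u'‖ ≤ 1 := by
    rw [hu'def, norm_smul, norm_inv, norm_norm, inv_mul_cancel₀ hfnorm.ne']
  set d' : ℝ := u' b with hd'def
  have hd'pos : 0 < d' := by
    rw [hd'def, hu'def]
    simp only [ContinuousLinearMap.smul_apply, smul_eq_mul]
    exact mul_pos (inv_pos.mpr hfnorm) hfb
  have hη0 : (0:ℝ) < min (min 1 (d' / 2)) (d' ^ 2 / 16) :=
    lt_min (lt_min one_pos (by positivity)) (by positivity)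
  set η : ℝ := min (min 1 (d' / 2)) (d' ^ 2 / 16) with hηdef
  have hη : 0 < η := hη0
  have hη1 : η ≤ 1 := le_trans (min_le_left _ _) (min_le_left _ _)
  have hη2 : η ≤ d' / 2 := le_trans (min_le_left _ _) (min_le_right _ _)
  have hη3 : η ≤ d' ^ 2 / 16 := min_le_right _ _
  obtain ⟨s, hs, hball⟩ := key_iteration L hL hsym A b hq η hη
  set N : ℝ := ‖b - s‖ with hNdef
  have hNnn : 0 ≤ N := norm_nonneg _
  set ρ : ℝ := η / (1 + N) with hρdef
  have hρpos : 0 < ρ := div_pos hη (by linarith)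
  have hρη : ρ * (1 + N) = η := by
    rw [hρdef]; field_simp
  have hρle : ρ ≤ η := by
    rw [hρdef]
    calc η / (1 + N) ≤ η / 1 := by
          apply div_le_div_of_nonneg_left hη.le one_pos; linarith
    _ = η := div_one η
  -- restriction of L (b - s) to A and its Hahn-Banach extension
  set f₁ : A →L[ℝ] ℝ := (L (b - s)).comp A.subtypeL with hf₁def
  have hf₁norm : ‖f₁‖ ≤ ρ := by
    apply ContinuousLinearMap.opNorm_le_bound _ hρpos.le
    intro x
    have h := hball x.1 x.2
    rw [hf₁def]
    simp only [ContinuousLinearMap.comp_apply, Submodule.subtypeL_apply,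
      Real.norm_eq_abs]
    rw [← Submodule.norm_coe x, hρdef, hNdef]
    exact h
  obtain ⟨e', he'x, he'n⟩ := exists_extension_norm_eq A f₁
  have he'norm : ‖e'‖ ≤ ρ := he'n ▸ hf₁norm
  have he'A : ∀ a ∈ A, e' a = L (b - s) a := by
    intro a ha
    have h := he'x ⟨a, ha⟩
    rw [hf₁def] at h
    simpa using h
  set w' : StrongDual ℝ B := L (b - s) - e' with hw'def
  have hw'A : ∀ a ∈ A, w' a = 0 := by
    intro a ha
    rw [hw'def]
    simp [ContinuousLinearMap.sub_apply, he'A a ha]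
  have hw'neg : qL Lt w' ≤ 0 := hneg w' hw'A
  -- identities through the double dual
  have happ : ∀ p : StrongDual ℝ B, Lt (L (b - s)) p = p (b - s) := by
    intro p; rw [hdual]; rfl
  have hqLtLbs : qL Lt (L (b - s)) = qL L (b - s) := by
    unfold qL
    rw [happ (L (b - s))]
  have hqs : 0 ≤ qL L (b - s) := hq s hs
  have hw'exp : qL Lt w' = qL L (b - s) - e' (b - s) + qL Lt e' := by
    have h1 : w' = L (b - s) - (1:ℝ) • e' := by rw [hw'def, one_smul]
    rw [h1, qL_sub_smul Lt hsymt, hqLtLbs, happ e']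
    ring
  have hqe' : -(1 / 2 * ρ ^ 2) ≤ qL Lt e' := by
    have h1 := abs_qL_le Lt hLt e'
    have h2 : ‖e'‖ ^ 2 ≤ ρ ^ 2 := by
      apply sq_le_sq' _ he'norm
      linarith [norm_nonneg e']
    have h3 := (abs_le.mp h1).1
    nlinarith
  have he'b : e' (b - s) ≤ ρ * N := by
    calc e' (b - s) ≤ |e' (b - s)| := le_abs_self _
    _ = ‖e' (b - s)‖ := (Real.norm_eq_abs _).symm
    _ ≤ ‖e'‖ * ‖b - s‖ := e'.le_opNorm _
    _ ≤ ρ * N := by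
        rw [← hNdef]
        exact mul_le_mul_of_nonneg_right he'norm hNnn
  have hw'low : -η ≤ qL Lt w' := by
    rw [hw'exp]
    have hρ2 : ρ ^ 2 / 2 ≤ ρ := by nlinarith
    nlinarith
  -- the discriminant inequality on the annihilator
  have hu'qneg : qL Lt u' ≤ 0 := hneg u' hu'A
  have hu'low : -(1/2 : ℝ) ≤ qL Lt u' := by
    have h1 := abs_qL_le Lt hLt u'
    have h2 : ‖u'‖ ^ 2 ≤ 1 := by
      calc ‖u'‖ ^ 2 ≤ 1 ^ 2 := pow_le_pow_left₀ (norm_nonneg _) hu'norm 2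
      _ = 1 := one_pow 2
    have h3 := (abs_le.mp h1).1
    linarith
  set β : ℝ := Lt w' u' with hβdef
  have hdisc : β ^ 2 ≤ 2 * η := by
    have hkey : ∀ t : ℝ, 0 ≤ (-qL Lt u') * (t * t) + (-β) * t + (-qL Lt w') := by
      intro t
      have hmem : ∀ a ∈ A, (w' + t • u') a = 0 := by
        intro a ha
        simp [ContinuousLinearMap.add_apply, ContinuousLinearMap.smul_apply,
          hw'A a ha, hu'A a ha]
      have h1 : qL Lt (w' + t • u') ≤ 0 := hneg _ hmem
      have h2 := qL_add_smul Lt hsymt w' u' t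
      rw [h2] at h1
      rw [hβdef]
      have ht : t * t = t ^ 2 := (sq t).symm
      rw [ht]
      linarith
    have hd := discrim_le_zero hkey
    rw [discrim] at hd
    have hprod : (-qL Lt u') * (-qL Lt w') ≤ (1/2) * η := by
      apply mul_le_mul (by linarith) (by linarith) (by linarith) (by norm_num)
    linarith
  have hβval : β = d' - Lt u' e' := by
    rw [hβdef, ← hsymt w' u', hw'def, map_sub]
    have h1 : Lt u' (L (b - s)) = u' (b - s) := by
      rw [hsymt (L (b - s)) u']
      exact happ u'
    rw [h1, map_sub, hu'A s hs, hd'def]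
    ring
  have hLtu'e' : |Lt u' e'| ≤ η := by
    have h1 : ‖Lt u' e'‖ ≤ ‖Lt u'‖ * ‖e'‖ := (Lt u').le_opNorm e'
    have h2 : ‖Lt u'‖ ≤ ‖u'‖ := by
      exact norm_apply_le_of_norm_le_one Lt hLt u'
    rw [Real.norm_eq_abs] at h1
    have h3 : ‖u'‖ * ‖e'‖ ≤ 1 * ρ :=
      mul_le_mul hu'norm he'norm (norm_nonneg _) zero_le_one
    have h4 : ‖Lt u'‖ * ‖e'‖ ≤ ‖u'‖ * ‖e'‖ :=
      mul_le_mul_of_nonneg_right h2 (norm_nonneg _)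
    linarith [hρle]
  have hβlow : d' / 2 ≤ β := by
    have h1 := (abs_le.mp hLtu'e').2
    rw [hβval]
    linarith
  have h5 : (d' / 2) ^ 2 ≤ β ^ 2 := by
    have h6 := mul_self_le_mul_self (by linarith : (0:ℝ) ≤ d' / 2) hβlow
    calc (d' / 2) ^ 2 = d' / 2 * (d' / 2) := sq (d'/2)
    _ ≤ β * β := h6
    _ = β ^ 2 := (sq β).symm
  have h7 : 0 < d' ^ 2 := by positivity
  linarith [hdisc, hβlow, hη3, h5, h7]
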